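/- Let n and t be positive integers with t ≤ ⌊n/2⌋, and define h_n(t) = (t-1)(2n-t)/2 if t < 2(n+1)/5 and h_n(t) = (t-1)(2t-1) if t ≥ 2(n+1)/5. If G is a graph of order n with more than h_n(t) edges, then G contains a matching of order t. -/

import Mathlib

/-- A matching of a graph: a pairwise disjoint set of its edges. -/
def IsMatchingOn {V : Type*} (G : SimpleGraph V) (M : Set (Sym2 V)) : Prop :=
  M ⊆ G.edgeSet ∧ M.Pairwise fun e f => ∀ v, v ∈ e → v ∉ f

/-- The extremal function h_n(t). -/
def hfun (n t : ℕ) : ℕ :=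
  if 5 * t < 2 * (n + 1) then (t - 1) * (2 * n - t) / 2 else (t - 1) * (2 * t - 1)

open Finset SimpleGraph

namespace EG

variable {V : Type*}

/-! ### Arithmetic facts about `hfun` -/

lemma hfun_one (n : ℕ) : hfun n 1 = 0 := by
  unfold hfun; split_ifs <;> simp

lemma hfun_ge_B {n t : ℕ} (ht : 1 ≤ t) (h2t : 2 * t ≤ n) :
    (t - 1) * (2 * t - 1) ≤ hfun n t := by
  unfold hfun; split_ifs with h
  · rw [Nat.le_div_iff_mul_le (by norm_num : 0 < 2)]
    have h1 : (2 * t - 1) * 2 ≤ 2 * n - t := by omega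
    calc (t - 1) * (2 * t - 1) * 2 = (t - 1) * ((2 * t - 1) * 2) := by ring
      _ ≤ (t - 1) * (2 * n - t) := Nat.mul_le_mul_left _ h1
  · exact le_rfl

lemma hfun_del1 {n t : ℕ} (ht : 1 ≤ t) (h : 5 * t ≤ 2 * n) :
    hfun (n - 1) t + (t - 1) ≤ hfun n t := by
  have hn : t + 2 ≤ n := by omega
  unfold hfun
  rw [if_pos (by omega : 5 * t < 2 * (n + 1))]
  split_ifs with h2
  · have key : (t - 1) * (2 * n - t) = (t - 1) * (2 * (n - 1) - t) + 2 * ((t - 1)) := by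
      have h3 : 2 * n - t = (2 * (n - 1) - t) + 2 := by omega
      rw [h3]; ring
    set p := (t - 1) * (2 * (n - 1) - t) with hp
    set q := (t - 1) * (2 * n - t) with hq
    omega
  · -- here 5 * t = 2 * n
    have h5 : 5 * t = 2 * n := by omega
    have hY : 2 * n - t = 4 * t := by omega
    rw [hY]
    obtain ⟨a, rfl⟩ : ∃ a, t = a + 1 := ⟨t - 1, by omega⟩
    have key : (a + 1 - 1) * (2 * (a + 1) - 1) = a * (2 * a + 1) := by congr 1 <;> omega
    rw [key]
    have key2 : (a + 1 - 1) * (4 * (a + 1)) = a * (4 * a + 4) := by congr 1 <;> omega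
    rw [key2]
    have key3 : 2 * (a * (2 * a + 1) + a) ≤ a * (4 * a + 4) := by nlinarith
    set p := a * (2 * a + 1)
    set q := a * (4 * a + 4)
    omega

lemma hfun_del2 {n t : ℕ} (ht : 2 ≤ t) (h2t : 2 * t ≤ n) (hd : 2 * n + 1 ≤ 5 * t) :
    hfun (n - 2) (t - 1) + (n + t - 3) ≤ hfun n t := by
  obtain ⟨a, rfl⟩ : ∃ a, t = a + 2 := ⟨t - 2, by omega⟩
  unfold hfun
  have ha1 : a + 2 - 1 = a + 1 := by omega
  have ha2 : a + 2 - 1 - 1 = a := by omega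
  by_cases hcase : 5 * (a + 2) ≤ 2 * n + 2
  · -- boundary cases : 5t = 2n+1 or 2n+2; the (n-2,t-1) value is in the sparse branch
    rw [if_pos (by omega : 5 * (a + 2 - 1) < 2 * (n - 2 + 1))]
    have hX : 2 * (n - 2) - (a + 2 - 1) = 2 * n - a - 5 := by omega
    rw [ha2, hX]
    rcases (by omega : 5 * (a + 2) = 2 * n + 1 ∨ 5 * (a + 2) = 2 * n + 2) with h5 | h5
    · -- 5t = 2n+1, n branch sparse
      rw [if_pos (by omega : 5 * (a + 2) < 2 * (n + 1)), ha1]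
      have hX2 : 2 * n - a - 5 = 4 * a + 4 := by omega
      have hY : 2 * n - (a + 2) = 4 * a + 7 := by omega
      rw [hX2, hY]
      have key : a * (4 * a + 4) + 2 * (n + (a + 2) - 3) ≤ (a + 1) * (4 * a + 7) := by
        have h7 : 2 * (n + (a + 2) - 3) = 7 * a + 7 := by omega
        rw [h7]; nlinarith
      set p := a * (4 * a + 4)
      set q := (a + 1) * (4 * a + 7)
      omega
    · -- 5t = 2n+2, n branch dense
      rw [if_neg (by omega : ¬ 5 * (a + 2) < 2 * (n + 1)), ha1]
      have hX2 : 2 * n - a - 5 = 4 * a + 3 := by omega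
      rw [hX2]
      have key : a * (4 * a + 3) + 2 * (n + (a + 2) - 3) ≤ 2 * ((a + 1) * (2 * (a + 2) - 1)) := by
        have h7 : 2 * (n + (a + 2) - 3) = 7 * a + 6 := by omega
        have h8 : 2 * (a + 2) - 1 = 2 * a + 3 := by omega
        rw [h7, h8]; nlinarith
      set p := a * (4 * a + 3)
      set q := (a + 1) * (2 * (a + 2) - 1)
      omega
  · -- strictly dense : 5t ≥ 2n+3, both values in the dense branch
    rw [if_neg (by omega : ¬ 5 * (a + 2) < 2 * (n + 1)),
        if_neg (by omega : ¬ 5 * (a + 2 - 1) < 2 * (n - 2 + 1)), ha1]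
    have ha2' : a + 1 - 1 = a := by omega
    have h8 : 2 * (a + 2) - 1 = 2 * a + 3 := by omega
    have h9 : 2 * (a + 1) - 1 = 2 * a + 1 := by omega
    rw [ha2', h8, h9]
    obtain ⟨m, rfl⟩ : ∃ m, n = 2 * a + 4 + m := ⟨n - (2 * a + 4), by omega⟩
    have h10 : 2 * a + 4 + m + (a + 2) - 3 = 3 * a + 3 + m := by omega
    rw [h10]
    have hm : m ≤ a + 1 := by omega
    nlinarith

/-! ### The `Finset` version of the matching predicate -/

/-- Finset version of the matching predicate. -/
def FM (G : SimpleGraph V) (M : Finset (Sym2 V)) : Prop :=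
  (M : Set (Sym2 V)) ⊆ G.edgeSet ∧
    (M : Set (Sym2 V)).Pairwise fun e f => ∀ v, v ∈ e → v ∉ f

lemma FM.empty (G : SimpleGraph V) : FM G (∅ : Finset (Sym2 V)) := by
  constructor
  · simp
  · simp [Set.Pairwise]

lemma FM.subset {G : SimpleGraph V} {M N : Finset (Sym2 V)} (h : N ⊆ M) (hM : FM G M) :
    FM G N := by
  refine ⟨fun e he => hM.1 (by exact_mod_cast h (by exact_mod_cast he)), ?_⟩
  exact hM.2.mono (by exact_mod_cast h)

lemma FM.mono_graph {G G' : SimpleGraph V} (h : G' ≤ G) {M : Finset (Sym2 V)}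
    (hM : FM G' M) : FM G M :=
  ⟨fun e he => SimpleGraph.edgeSet_mono h (hM.1 he), hM.2⟩

lemma FM.insert_of [DecidableEq V] {G : SimpleGraph V} {M : Finset (Sym2 V)} (hM : FM G M)
    {a b : V} (hab : G.Adj a b) (ha : ∀ e ∈ M, a ∉ e) (hb : ∀ e ∈ M, b ∉ e) :
    FM G (insert s(a,b) M) ∧ s(a,b) ∉ M := by
  have hnotmem : s(a,b) ∉ M := fun hmem => ha _ hmem (by simp)
  refine ⟨⟨?_, ?_⟩, hnotmem⟩
  · rw [coe_insert]
    exact Set.insert_subset (G.mem_edgeSet.2 hab) hM.1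
  · rw [coe_insert, Set.pairwise_insert]
    refine ⟨hM.2, fun f hf hne => ⟨?_, ?_⟩⟩
    · intro x hx
      rcases Sym2.mem_iff.1 hx with rfl | rfl
      · exact ha f hf
      · exact hb f hf
    · intro x hxf hxe
      rcases Sym2.mem_iff.1 hxe with rfl | rfl
      · exact ha f hf hxf
      · exact hb f hf hxf

/-! ### Counting lemmas for edge/vertex deletion -/

lemma ncard_incidenceSet [Fintype V] (G : SimpleGraph V) (v : V) :
    (G.incidenceSet v).ncard = (G.neighborSet v).ncard := by
  classical
  rw [← Nat.card_coe_set_eq, ← Nat.card_coe_set_eq]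
  exact Nat.card_congr (G.incidenceSetEquivNeighborSet v)

lemma edgeSet_del1_ncard [Fintype V] (G : SimpleGraph V) (v : V) :
    (G.deleteEdges (G.incidenceSet v)).edgeSet.ncard
      = G.edgeSet.ncard - (G.neighborSet v).ncard := by
  rw [edgeSet_deleteEdges, Set.ncard_diff (G.incidenceSet_subset v), ncard_incidenceSet]

lemma nbr_le_edge [Fintype V] (G : SimpleGraph V) (v : V) :
    (G.neighborSet v).ncard ≤ G.edgeSet.ncard := by
  rw [← ncard_incidenceSet]
  exact Set.ncard_le_ncard (G.incidenceSet_subset v) (Set.toFinite _)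

lemma edgeSet_del2_ncard [Fintype V] (G : SimpleGraph V) {u v : V} (h : G.Adj u v) :
    (G.deleteEdges (G.incidenceSet u ∪ G.incidenceSet v)).edgeSet.ncard
        + (G.neighborSet u).ncard + (G.neighborSet v).ncard
      = G.edgeSet.ncard + 1 := by
  have hsub : G.incidenceSet u ∪ G.incidenceSet v ⊆ G.edgeSet :=
    Set.union_subset (G.incidenceSet_subset u) (G.incidenceSet_subset v)
  have hU : (G.incidenceSet u ∪ G.incidenceSet v).ncard + 1
      = (G.neighborSet u).ncard + (G.neighborSet v).ncard := by
    have h1 := Set.ncard_union_add_ncard_inter (G.incidenceSet u) (G.incidenceSet v)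
      (Set.toFinite _) (Set.toFinite _)
    rw [G.incidenceSet_inter_incidenceSet_of_adj h, Set.ncard_singleton,
      ncard_incidenceSet, ncard_incidenceSet] at h1
    exact h1
  rw [edgeSet_deleteEdges, Set.ncard_diff hsub]
  have hle : (G.incidenceSet u ∪ G.incidenceSet v).ncard ≤ G.edgeSet.ncard :=
    Set.ncard_le_ncard hsub (Set.toFinite _)
  omega

lemma support_del1_subset (G : SimpleGraph V) (v : V) :
    (G.deleteEdges (G.incidenceSet v)).support ⊆ G.support \ {v} := by
  intro w hw
  obtain ⟨x, hadj⟩ := (SimpleGraph.mem_support _).1 hw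
  rw [SimpleGraph.deleteEdges_adj] at hadj
  refine ⟨⟨x, hadj.1⟩, ?_⟩
  intro hwv
  rw [Set.mem_singleton_iff] at hwv
  subst hwv
  exact hadj.2 ⟨G.mem_edgeSet.mpr hadj.1, by simp⟩

lemma support_del2_subset (G : SimpleGraph V) (u v : V) :
    (G.deleteEdges (G.incidenceSet u ∪ G.incidenceSet v)).support ⊆ G.support \ {u, v} := by
  intro w hw
  obtain ⟨x, hadj⟩ := (SimpleGraph.mem_support _).1 hw
  rw [SimpleGraph.deleteEdges_adj] at hadj
  refine ⟨⟨x, hadj.1⟩, ?_⟩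
  intro hwv
  rcases hwv with rfl | rfl
  · exact hadj.2 (Or.inl ⟨G.mem_edgeSet.mpr hadj.1, by simp⟩)
  · exact hadj.2 (Or.inr ⟨G.mem_edgeSet.mpr hadj.1, by simp⟩)

lemma not_mem_edge_del2 (G : SimpleGraph V) (u v : V) {e : Sym2 V}
    (he : e ∈ (G.deleteEdges (G.incidenceSet u ∪ G.incidenceSet v)).edgeSet) :
    u ∉ e ∧ v ∉ e := by
  rw [edgeSet_deleteEdges] at he
  constructor
  · intro hu; exact he.2 (Or.inl ⟨he.1, hu⟩)
  · intro hv; exact he.2 (Or.inr ⟨he.1, hv⟩)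

lemma ncard_nbr_deg [Fintype V] (G : SimpleGraph V) [DecidableRel G.Adj] (v : V) :
    (G.neighborSet v).ncard = G.degree v := by
  rw [← card_neighborSet_eq_degree, ← Nat.card_coe_set_eq, Nat.card_eq_fintype_card]

lemma handshake_support [Fintype V] (G : SimpleGraph V) :
    2 * G.edgeSet.ncard ≤ G.support.ncard * (G.support.ncard - 1) := by
  classical
  have hSF : G.support.ncard = (G.support.toFinite.toFinset).card :=
    Set.ncard_eq_toFinset_card _ _
  set SF : Finset V := G.support.toFinite.toFinset with hSFdef
  have hE : G.edgeSet.ncard = G.edgeFinset.card := by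
    rw [← Nat.card_coe_set_eq, Nat.card_eq_fintype_card, ← Set.toFinset_card]
    congr 1
  rw [hE, ← G.sum_degrees_eq_twice_card_edges]
  have hzero : ∀ v ∈ (Finset.univ : Finset V), v ∉ SF → G.degree v = 0 := by
    intro v _ hv
    rw [← ncard_nbr_deg]
    have hempty : G.neighborSet v = ∅ := by
      ext w
      simp only [mem_neighborSet, Set.mem_empty_iff_false, iff_false]
      intro hadj
      exact hv (by rw [hSFdef, Set.Finite.mem_toFinset]; exact ⟨w, hadj⟩)
    simp [hempty]
  rw [← Finset.sum_subset (Finset.subset_univ SF) hzero]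
  have hdeg : ∀ v ∈ SF, G.degree v ≤ SF.card - 1 := by
    intro v hv
    have hsub : G.neighborFinset v ⊆ SF.erase v := by
      intro w hw
      rw [mem_neighborFinset] at hw
      refine Finset.mem_erase.2 ⟨(G.ne_of_adj hw.symm), ?_⟩
      rw [hSFdef, Set.Finite.mem_toFinset]
      exact ⟨v, hw.symm⟩
    calc G.degree v = (G.neighborFinset v).card := rfl
      _ ≤ (SF.erase v).card := Finset.card_le_card hsub
      _ = SF.card - 1 := Finset.card_erase_of_mem hv
  calc ∑ v ∈ SF, G.degree v ≤ ∑ _v ∈ SF, (SF.card - 1) := Finset.sum_le_sum hdeg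
    _ = SF.card * (SF.card - 1) := by rw [Finset.sum_const, smul_eq_mul]
    _ = G.support.ncard * (G.support.ncard - 1) := by rw [hSF]

/-! ### The augmentation lemma -/

lemma three_of_four [DecidableEq V] {x y : V} (hxy : x ≠ y) {A B : Finset V}
    (h3 : 2 < (A ∩ {x, y}).card + (B ∩ {x, y}).card) :
    (x ∈ A ∧ y ∈ B) ∨ (y ∈ A ∧ x ∈ B) := by
  have key : ∀ N : Finset V,
      (N ∩ {x, y}).card = (if x ∈ N then 1 else 0) + (if y ∈ N then 1 else 0) := by
    intro N
    rw [Finset.inter_comm, ← Finset.filter_mem_eq_inter, Finset.filter_insert,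
      Finset.filter_singleton]
    split_ifs with h1 h2 h2
    · rw [Finset.card_insert_of_notMem (by simp [hxy])]; simp
    · simp
    · simp
    · simp
  rw [key A, key B] at h3
  split_ifs at h3 <;> first | omega | tauto

/-- If every support vertex has degree at least `t` and the support has at least `2t`
vertices, then there is a matching of size `t` (classical augmenting-pair argument on a
maximum matching). -/
lemma lemA [Fintype V] (G : SimpleGraph V) (t : ℕ)
    (hdeg : ∀ v ∈ G.support, t ≤ (G.neighborSet v).ncard)
    (hs : 2 * t ≤ G.support.ncard) :
    ∃ M : Finset (Sym2 V), FM G M ∧ M.card = t := by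
  classical
  set SS : Finset (Finset (Sym2 V)) := G.edgeFinset.powerset.filter (fun M => FM G M)
    with hSS
  have hmemSS : ∀ M : Finset (Sym2 V), M ∈ SS ↔ FM G M := by
    intro M
    rw [hSS, mem_filter, mem_powerset]
    constructor
    · exact fun h => h.2
    · intro h
      refine ⟨fun e he => ?_, h⟩
      rw [mem_edgeFinset]
      exact h.1 (Finset.mem_coe.2 he)
  have hne : SS.Nonempty := ⟨∅, (hmemSS ∅).2 (FM.empty G)⟩
  obtain ⟨M, hMSS, hmax⟩ := Finset.exists_max_image SS Finset.card hne
  have hFM : FM G M := (hmemSS M).1 hMSS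
  rcases le_or_gt t M.card with hle | hlt
  · obtain ⟨N, hNM, hN⟩ := Finset.exists_subset_card_eq hle
    exact ⟨N, FM.subset hNM hFM, hN⟩
  exfalso
  set k := M.card with hk
  set pairF : Sym2 V → Finset V := fun e => Finset.univ.filter (· ∈ e) with hpairF
  have hpair_mem : ∀ (x : V) (e : Sym2 V), x ∈ pairF e ↔ x ∈ e := by
    intro x e; simp [hpairF]
  have hpair_two : ∀ a b : V, pairF s(a, b) = {a, b} := by
    intro a b
    ext z
    simp [hpairF, Sym2.mem_iff]
  have hpair_card : ∀ e : Sym2 V, (pairF e).card ≤ 2 := by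
    intro e
    induction e using Sym2.ind with
    | _ a b =>
      rw [hpair_two]
      exact (Finset.card_insert_le _ _).trans (by simp)
  set C : Finset V := M.biUnion pairF with hC
  have hmemC : ∀ x, x ∈ C ↔ ∃ e ∈ M, x ∈ e := by
    intro x
    rw [hC, mem_biUnion]
    constructor
    · rintro ⟨e, he, hx⟩; exact ⟨e, he, (hpair_mem x e).1 hx⟩
    · rintro ⟨e, he, hx⟩; exact ⟨e, he, (hpair_mem x e).2 hx⟩
  have hCcard : C.card ≤ 2 * k := by
    calc C.card ≤ ∑ e ∈ M, (pairF e).card := card_biUnion_le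
      _ ≤ ∑ _e ∈ M, 2 := sum_le_sum fun e _ => hpair_card e
      _ = 2 * k := by rw [sum_const, smul_eq_mul, mul_comm]
  have hdisj : ∀ e ∈ M, ∀ f ∈ M, e ≠ f → Disjoint (pairF e) (pairF f) := by
    intro e he f hf hnef
    rw [Finset.disjoint_left]
    intro z hze hzf
    exact hFM.2 (Finset.mem_coe.2 he) (Finset.mem_coe.2 hf) hnef z
      ((hpair_mem z e).1 hze) ((hpair_mem z f).1 hzf)
  set SF : Finset V := G.support.toFinite.toFinset with hSF
  have hSFcard : SF.card = G.support.ncard := (Set.ncard_eq_toFinset_card _ _).symm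
  have hSFmem : ∀ x, x ∈ SF ↔ x ∈ G.support := fun x => Set.Finite.mem_toFinset _
  have h2 : 1 < (SF \ C).card := by
    have hss := Finset.le_card_sdiff C SF
    omega
  obtain ⟨u, hu, v, hv, huv⟩ := Finset.one_lt_card.1 h2
  obtain ⟨huS, huC⟩ := Finset.mem_sdiff.1 hu
  obtain ⟨hvS, hvC⟩ := Finset.mem_sdiff.1 hv
  have hunc : ∀ x, x ∉ C → ∀ e ∈ M, x ∉ e := fun x hx e he hxe =>
    hx ((hmemC x).2 ⟨e, he, hxe⟩)
  have hnoext : ∀ M' : Finset (Sym2 V), FM G M' → M'.card = k + 1 → False := by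
    intro M' hM' hcard
    have := hmax M' ((hmemSS M').2 hM')
    omega
  have hcov : ∀ x, x ∉ C → ∀ w, G.Adj x w → w ∈ C := by
    intro x hxC w hadj
    by_contra hwC
    obtain ⟨hFM', hnm⟩ := FM.insert_of hFM hadj (hunc x hxC) (hunc w hwC)
    exact hnoext _ hFM' (by rw [card_insert_of_notMem hnm])
  have hsplit : ∀ x, x ∉ C →
      (G.neighborFinset x).card = ∑ e ∈ M, (G.neighborFinset x ∩ pairF e).card := by
    intro x hxC
    have heq : G.neighborFinset x = M.biUnion (fun e => G.neighborFinset x ∩ pairF e) := by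
      ext w
      simp only [mem_biUnion, mem_inter]
      constructor
      · intro hw
        have hwC := hcov x hxC w ((mem_neighborFinset _ _ _).1 hw)
        obtain ⟨e, he, hwe⟩ := (hmemC w).1 hwC
        exact ⟨e, he, hw, (hpair_mem w e).2 hwe⟩
      · rintro ⟨e, _, hw, _⟩; exact hw
    conv_lhs => rw [heq]
    exact card_biUnion fun e he f hf hnef =>
      Finset.disjoint_of_subset_left inter_subset_right
        (Finset.disjoint_of_subset_right inter_subset_right (hdisj e he f hf hnef))
  have hdegF : ∀ x, x ∈ SF → t ≤ (G.neighborFinset x).card := by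
    intro x hx
    have := hdeg x ((hSFmem x).1 hx)
    rwa [Set.ncard_eq_toFinset_card', Set.toFinset_card, card_neighborSet_eq_degree] at this
  have hlt2 : ∑ _e ∈ M, 2 <
      ∑ e ∈ M, ((G.neighborFinset u ∩ pairF e).card + (G.neighborFinset v ∩ pairF e).card) := by
    rw [Finset.sum_add_distrib, ← hsplit u huC, ← hsplit v hvC, sum_const, smul_eq_mul]
    have h1 := hdegF u huS
    have h2' := hdegF v hvS
    omega
  obtain ⟨e, heM, he3⟩ := Finset.exists_lt_of_sum_lt hlt2
  obtain ⟨x, y, rfl⟩ : ∃ x y, e = s(x, y) := by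
    induction e using Sym2.ind with
    | _ x y => exact ⟨x, y, rfl⟩
  have hedge : G.Adj x y := G.mem_edgeSet.1 (hFM.1 (Finset.mem_coe.2 heM))
  have hxy : x ≠ y := hedge.ne
  rw [hpair_two] at he3
  have hflags := three_of_four hxy he3
  have hbuild : ∀ a b : V, s(a, b) = s(x, y) → G.Adj u a → G.Adj v b → False := by
    intro a b hab hua hvb
    have hane : a ≠ b := by
      intro h
      subst h
      rw [Sym2.eq_iff] at hab
      rcases hab with ⟨rfl, rfl⟩ | ⟨rfl, rfl⟩ <;> exact hxy rfl
    have haE : a ∈ s(x, y) := by rw [← hab]; simp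
    have hbE : b ∈ s(x, y) := by rw [← hab]; simp
    have haC : a ∈ C := (hmemC a).2 ⟨s(x, y), heM, haE⟩
    have hbC : b ∈ C := (hmemC b).2 ⟨s(x, y), heM, hbE⟩
    have haM : ∀ f ∈ M.erase s(x, y), a ∉ f := by
      intro f hf
      exact hFM.2 (Finset.mem_coe.2 heM) (Finset.mem_coe.2 (Finset.erase_subset _ _ hf))
        (Finset.ne_of_mem_erase hf).symm a haE
    have hbM : ∀ f ∈ M.erase s(x, y), b ∉ f := by
      intro f hf
      exact hFM.2 (Finset.mem_coe.2 heM) (Finset.mem_coe.2 (Finset.erase_subset _ _ hf))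
        (Finset.ne_of_mem_erase hf).symm b hbE
    have hu_not : ∀ f ∈ M.erase s(x, y), u ∉ f := fun f hf =>
      hunc u huC f (Finset.erase_subset _ _ hf)
    have hv_not : ∀ f ∈ M.erase s(x, y), v ∉ f := fun f hf =>
      hunc v hvC f (Finset.erase_subset _ _ hf)
    have hFMer : FM G (M.erase s(x, y)) := FM.subset (Finset.erase_subset _ _) hFM
    obtain ⟨hFM1, hnm1⟩ := FM.insert_of hFMer hvb hv_not hbM
    set M1 : Finset (Sym2 V) := insert s(v, b) (M.erase s(x, y)) with hM1
    have hu_not1 : ∀ f ∈ M1, u ∉ f := by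
      intro f hf
      rcases Finset.mem_insert.1 hf with rfl | hf'
      · intro hmem
        rcases Sym2.mem_iff.1 hmem with rfl | rfl
        · exact huv rfl
        · exact huC hbC
      · exact hu_not f hf'
    have ha_not1 : ∀ f ∈ M1, a ∉ f := by
      intro f hf
      rcases Finset.mem_insert.1 hf with rfl | hf'
      · intro hmem
        rcases Sym2.mem_iff.1 hmem with rfl | rfl
        · exact hvC haC
        · exact hane rfl
      · exact haM f hf'
    obtain ⟨hFM2, hnm2⟩ := FM.insert_of hFM1 hua hu_not1 ha_not1
    apply hnoext _ hFM2
    rw [card_insert_of_notMem hnm2, hM1, card_insert_of_notMem hnm1,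
      Finset.card_erase_of_mem heM]
    have hk1 : 1 ≤ k := Finset.card_pos.2 ⟨_, heM⟩
    omega
  rcases hflags with ⟨h1, h2'⟩ | ⟨h1, h2'⟩
  · exact hbuild x y rfl ((mem_neighborFinset _ _ _).1 h1) ((mem_neighborFinset _ _ _).1 h2')
  · exact hbuild y x (Sym2.eq_swap) ((mem_neighborFinset _ _ _).1 h1)
      ((mem_neighborFinset _ _ _).1 h2')

/-! ### The main induction -/

theorem aux : ∀ n t : ℕ, 1 ≤ t → 2 * t ≤ n →
    ∀ {W : Type*} [Fintype W] (G : SimpleGraph W),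
      G.support.ncard ≤ n → hfun n t < G.edgeSet.ncard →
      ∃ M : Finset (Sym2 W), FM G M ∧ M.card = t := by
  intro n
  induction n using Nat.strong_induction_on with
  | _ n IH =>
    intro t ht h2t W _ G hsupp hE
    classical
    by_cases ht1 : t = 1
    · subst ht1
      rw [hfun_one] at hE
      obtain ⟨e, he⟩ := (Set.ncard_pos (Set.toFinite _)).1 hE
      refine ⟨{e}, ⟨?_, ?_⟩, Finset.card_singleton e⟩
      · rw [coe_singleton]; exact Set.singleton_subset_iff.2 he
      · rw [coe_singleton]; exact Set.pairwise_singleton _ _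
    have ht2 : 2 ≤ t := by omega
    have hsupp2t : 2 * t ≤ G.support.ncard := by
      by_contra hcon
      push_neg at hcon
      have h1 := handshake_support G
      have h2 : G.support.ncard * (G.support.ncard - 1) ≤ (2 * t - 1) * (2 * t - 2) :=
        Nat.mul_le_mul (by omega) (by omega)
      have h3 : (2 * t - 1) * (2 * t - 2) = 2 * ((t - 1) * (2 * t - 1)) := by
        obtain ⟨a, rfl⟩ : ∃ a, t = a + 1 := ⟨t - 1, by omega⟩
        have e1 : 2 * (a + 1) - 1 = 2 * a + 1 := by omega
        have e2 : 2 * (a + 1) - 2 = 2 * a := by omega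
        have e3 : a + 1 - 1 = a := by omega
        rw [e1, e2, e3]; ring
      have h4 := hfun_ge_B ht h2t
      omega
    by_cases hdeg : ∀ v ∈ G.support, t ≤ (G.neighborSet v).ncard
    · exact lemA G t hdeg hsupp2t
    push_neg at hdeg
    obtain ⟨v, hvS, hvdeg⟩ := hdeg
    by_cases hreg : 5 * t ≤ 2 * n
    · -- sparse regime : delete the low-degree vertex v
      set G' := G.deleteEdges (G.incidenceSet v) with hG'
      have hE' : hfun (n - 1) t < G'.edgeSet.ncard := by
        have h1 := edgeSet_del1_ncard G v
        rw [← hG'] at h1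
        have h2 := hfun_del1 ht hreg
        have h3 := nbr_le_edge G v
        omega
      have hsupp' : G'.support.ncard ≤ n - 1 := by
        have h1 := support_del1_subset G v
        have h2 : (G.support \ {v}).ncard = G.support.ncard - 1 := by
          rw [Set.ncard_diff (Set.singleton_subset_iff.2 hvS), Set.ncard_singleton]
        have h3 : G'.support.ncard ≤ (G.support \ {v}).ncard :=
          Set.ncard_le_ncard h1 (Set.toFinite _)
        have h4 : 0 < G.support.ncard := (Set.ncard_pos (Set.toFinite _)).2 ⟨v, hvS⟩
        omega
      have h2t' : 2 * t ≤ n - 1 := by omega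
      obtain ⟨M, hM, hMcard⟩ := IH (n - 1) (by omega) t ht h2t' G' hsupp' hE'
      exact ⟨M, FM.mono_graph (SimpleGraph.deleteEdges_le _) hM, hMcard⟩
    · -- dense regime : delete both endpoints of an edge at v
      push_neg at hreg
      obtain ⟨u, hadj⟩ := (SimpleGraph.mem_support _).1 hvS
      set G'' := G.deleteEdges (G.incidenceSet v ∪ G.incidenceSet u) with hG''
      have huS : u ∈ G.support := ⟨v, hadj.symm⟩
      have hdu : (G.neighborSet u).ncard ≤ n - 1 := by
        have hsub : G.neighborSet u ⊆ G.support \ {u} := by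
          intro w hw
          rw [SimpleGraph.mem_neighborSet] at hw
          exact ⟨⟨u, hw.symm⟩, fun hwu => (G.ne_of_adj hw).symm (by simpa using hwu)⟩
        have h1 : (G.support \ {u}).ncard = G.support.ncard - 1 := by
          rw [Set.ncard_diff (Set.singleton_subset_iff.2 huS), Set.ncard_singleton]
        have h2 := Set.ncard_le_ncard hsub (Set.toFinite _)
        omega
      have hE'' : hfun (n - 2) (t - 1) < G''.edgeSet.ncard := by
        have h1 := edgeSet_del2_ncard G hadj
        rw [← hG''] at h1
        have h2 := hfun_del2 ht2 h2t (by omega)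
        omega
      have hsupp'' : G''.support.ncard ≤ n - 2 := by
        have h1 := support_del2_subset G v u
        have h2 : ({v, u} : Set W).ncard = 2 := Set.ncard_pair (G.ne_of_adj hadj)
        have h3 : (G.support \ {v, u}).ncard = G.support.ncard - 2 := by
          rw [Set.ncard_diff ?hvu]
          · rw [h2]
          case hvu =>
            rw [Set.insert_subset_iff, Set.singleton_subset_iff]
            exact ⟨hvS, huS⟩
        have h4 : G''.support.ncard ≤ (G.support \ {v, u}).ncard :=
          Set.ncard_le_ncard h1 (Set.toFinite _)
        omega
      obtain ⟨M, hM, hMcard⟩ := IH (n - 2) (by omega) (t - 1) (by omega)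
        (by omega : 2 * (t - 1) ≤ n - 2) G'' hsupp'' hE''
      have hvnot : ∀ e ∈ M, v ∉ e := fun e he =>
        (not_mem_edge_del2 G v u (hM.1 (Finset.mem_coe.2 he))).1
      have hunot : ∀ e ∈ M, u ∉ e := fun e he =>
        (not_mem_edge_del2 G v u (hM.1 (Finset.mem_coe.2 he))).2
      obtain ⟨hFM', hnm⟩ :=
        FM.insert_of (FM.mono_graph (SimpleGraph.deleteEdges_le _) hM) hadj hvnot hunot
      refine ⟨insert s(v, u) M, hFM', ?_⟩
      rw [card_insert_of_notMem hnm, hMcard]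
      omega

end EG

theorem stmt_5 {V : Type*} [Fintype V] (n t : ℕ) (ht : 1 ≤ t) (htn : t ≤ n / 2)
    (G : SimpleGraph V) (hn : Fintype.card V = n)
    (hE : hfun n t < G.edgeSet.ncard) :
    ∃ M : Set (Sym2 V), IsMatchingOn G M ∧ M.ncard = t := by
  classical
  have h2t : 2 * t ≤ n := by omega
  have hsupp : G.support.ncard ≤ n := by
    have h1 : (Set.univ : Set V).ncard = n := by
      rw [Set.ncard_univ, Nat.card_eq_fintype_card, hn]
    calc G.support.ncard ≤ (Set.univ : Set V).ncard :=
          Set.ncard_le_ncard (Set.subset_univ _) (Set.toFinite _)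
      _ = n := h1
  obtain ⟨M, hM, hMcard⟩ := EG.aux n t ht h2t G hsupp hE
  exact ⟨(M : Set (Sym2 V)), ⟨hM.1, hM.2⟩, by rw [Set.ncard_coe_finset, hMcard]⟩
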